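/- Let G be an input-consistent edge-labeled graph with node set V totally ordered by <, and let L be the list of edges (a,u,v) sorted lexicographically by (label, source rank, destination rank). Then < satisfies the Wheeler properties if and only if for every pair of consecutive edges (a_i,u_i,v_i),(a_{i+1},u_{i+1},v_{i+1}) in L we have: a_i = a_{i+1} implies v_i ≤ v_{i+1}, and a_i ≠ a_{i+1} implies v_i < v_{i+1} (assuming in-degree-0 nodes precede all others in <). -/

import Mathlib

private lemma chain'_and_aux {α : Type*} {R S : α → α → Prop} :
    ∀ {l : List α}, l.Chain' R → l.Chain' S → l.Chain' (fun a b => R a b ∧ S a b) := by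
  intro l hR hS
  rw [List.Chain', List.isChain_iff_getElem] at hR hS ⊢
  exact fun i h => ⟨hR i h, hS i h⟩

/-- Checking Wheelerness of a given total order in linear time: let `G` be an
input-consistent labeled graph over a totally ordered node set (with in-degree-0
nodes preceding all others), and let `Lst` be the list of its edges `(a, u, v)`
sorted lexicographically by (label, source, destination). Then the order satisfies
the Wheeler properties iff every pair of consecutive edges `(a₁,u₁,v₁), (a₂,u₂,v₂)`
in `Lst` satisfies: `a₁ = a₂ → v₁ ≤ v₂` and `a₁ ≠ a₂ → v₁ < v₂`. -/
theorem stmt16 {V A : Type*} [LinearOrder V] [LinearOrder A]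
    (E : V → A → V → Prop)
    -- input-consistency
    (hic : ∀ (w : V) (u a u' a'), E u a w → E u' a' w → a = a')
    -- in-degree-0 nodes precede all others
    (hsrc : ∀ x w : V, (∀ u a, ¬ E u a x) → (∃ u a, E u a w) → x < w)
    (Lst : List (A × V × V))
    (hmem : ∀ a u v, (a, u, v) ∈ Lst ↔ E u a v)
    (hsorted : Lst.Pairwise (Prod.Lex (· < ·) (Prod.Lex (· < ·) (· < ·)))) :
    ((∀ u₁ a₁ v₁ u₂ a₂ v₂, E u₁ a₁ v₁ → E u₂ a₂ v₂ → a₁ < a₂ → v₁ < v₂) ∧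
     (∀ u₁ v₁ u₂ v₂ a, E u₁ a v₁ → E u₂ a v₂ → u₁ < u₂ → v₁ ≤ v₂)) ↔
    Lst.Chain' (fun e₁ e₂ =>
      (e₁.1 = e₂.1 → e₁.2.2 ≤ e₂.2.2) ∧ (e₁.1 ≠ e₂.1 → e₁.2.2 < e₂.2.2)) := by
  classical
  set LX : (A × V × V) → (A × V × V) → Prop :=
    Prod.Lex (· < ·) (Prod.Lex (· < ·) (· < ·)) with hLX
  have hlex : ∀ e₁ e₂ : A × V × V, LX e₁ e₂ ↔
      e₁.1 < e₂.1 ∨ e₁.1 = e₂.1 ∧ (e₁.2.1 < e₂.2.1 ∨ e₁.2.1 = e₂.2.1 ∧ e₁.2.2 < e₂.2.2) := by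
    intro e₁ e₂
    rw [hLX, Prod.lex_def, Prod.lex_def]
  have hasymm : ∀ e₁ e₂ : A × V × V, LX e₁ e₂ → LX e₂ e₁ → False := by
    intro e₁ e₂ h h'
    rcases (hlex _ _).mp h with h | ⟨h1, h | ⟨h2, h⟩⟩ <;>
        rcases (hlex _ _).mp h' with h' | ⟨h1', h' | ⟨h2', h'⟩⟩
    · exact lt_asymm h h'
    · exact absurd h1' (ne_of_gt h)
    · exact absurd h1' (ne_of_gt h)
    · exact absurd h1 (ne_of_gt h')
    · exact lt_asymm h h'
    · exact absurd h2' (ne_of_gt h)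
    · exact absurd h1 (ne_of_gt h')
    · exact absurd h2 (ne_of_gt h')
    · exact lt_asymm h h'
  have hirr : ∀ e : A × V × V, ¬ LX e e := by
    intro e h
    exact hasymm e e h h
  constructor
  · rintro ⟨h1, h2⟩
    refine List.Pairwise.isChain (List.Pairwise.imp_of_mem ?_ hsorted)
    rintro ⟨a₁, u₁, v₁⟩ ⟨a₂, u₂, v₂⟩ hm₁ hm₂ hlt
    have he₁ : E u₁ a₁ v₁ := (hmem _ _ _).mp hm₁
    have he₂ : E u₂ a₂ v₂ := (hmem _ _ _).mp hm₂
    rcases (hlex _ _).mp hlt with h | ⟨rfl, h | ⟨rfl, h⟩⟩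
    · exact ⟨fun he => absurd he (ne_of_lt h), fun _ => h1 _ _ _ _ _ _ he₁ he₂ h⟩
    · exact ⟨fun _ => h2 _ _ _ _ _ he₁ he₂ h, fun hn => absurd rfl hn⟩
    · exact ⟨fun _ => le_of_lt h, fun hn => absurd rfl hn⟩
  · intro hch
    set S : (A × V × V) → (A × V × V) → Prop := fun e₁ e₂ =>
      e₁.1 ≤ e₂.1 ∧ (e₁.1 = e₂.1 → e₁.2.2 ≤ e₂.2.2) ∧ (e₁.1 ≠ e₂.1 → e₁.2.2 < e₂.2.2)
      with hS
    have hStrans : Transitive S := by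
      rintro ⟨a₁, u₁, v₁⟩ ⟨a₂, u₂, v₂⟩ ⟨a₃, u₃, v₃⟩ ⟨hab, h1, h2⟩ ⟨hbc, h3, h4⟩
      refine ⟨le_trans hab hbc, ?_, ?_⟩
      · rintro rfl
        have h12 : a₁ = a₂ := le_antisymm hab hbc
        subst h12
        exact le_trans (h1 rfl) (h3 rfl)
      · intro hne
        by_cases h12 : a₁ = a₂
        · subst h12
          by_cases h23 : a₁ = a₃
          · exact absurd h23 hne
          · exact lt_of_le_of_lt (h1 rfl) (h4 h23)
        · by_cases h23 : a₂ = a₃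
          · subst h23
            exact lt_of_lt_of_le (h2 h12) (h3 rfl)
          · exact lt_trans (h2 h12) (h4 h23)
    have hchS : Lst.Chain' S := by
      have hcombo := chain'_and_aux hsorted.isChain hch
      refine hcombo.imp ?_
      rintro ⟨a₁, u₁, v₁⟩ ⟨a₂, u₂, v₂⟩ ⟨hlt, hle, hne⟩
      refine ⟨?_, hle, hne⟩
      rcases (hlex _ _).mp hlt with h | ⟨h, _⟩
      · exact le_of_lt h
      · exact le_of_eq h
    haveI : IsTrans (A × V × V) S := ⟨fun _ _ _ h h' => hStrans h h'⟩
    have hpairS : Lst.Pairwise S := List.isChain_iff_pairwise.mp hchS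
    have hpairLS : Lst.Pairwise (fun e₁ e₂ => LX e₁ e₂ ∧ S e₁ e₂) :=
      hsorted.and hpairS
    have hkey : ∀ e₁ e₂ : A × V × V, e₁ ∈ Lst → e₂ ∈ Lst → LX e₁ e₂ → S e₁ e₂ := by
      intro e₁ e₂ hm₁ hm₂ hlt
      have hT : Lst.Pairwise (fun e₁ e₂ =>
          (LX e₁ e₂ ∧ S e₁ e₂) ∨ (LX e₂ e₁ ∧ S e₂ e₁)) :=
        hpairLS.imp Or.inl
      have hne : e₁ ≠ e₂ := by
        rintro rfl; exact hirr _ hlt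
      rcases (haveI : Std.Symm (fun e₁ e₂ : A × V × V => (LX e₁ e₂ ∧ S e₁ e₂) ∨ (LX e₂ e₁ ∧ S e₂ e₁)) := ⟨fun a b h => h.symm⟩; hT.forall hm₁ hm₂ hne) with ⟨_, hS'⟩ | ⟨hlt', _⟩
      · exact hS'
      · exact absurd hlt' (fun h => hasymm _ _ hlt h)
    constructor
    · intro u₁ a₁ v₁ u₂ a₂ v₂ he₁ he₂ ha
      have hm₁ : (a₁, u₁, v₁) ∈ Lst := (hmem _ _ _).mpr he₁
      have hm₂ : (a₂, u₂, v₂) ∈ Lst := (hmem _ _ _).mpr he₂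
      have hlt : LX (a₁, u₁, v₁) (a₂, u₂, v₂) := (hlex _ _).mpr (Or.inl ha)
      exact (hkey _ _ hm₁ hm₂ hlt).2.2 (ne_of_lt ha)
    · intro u₁ v₁ u₂ v₂ a he₁ he₂ hu
      have hm₁ : (a, u₁, v₁) ∈ Lst := (hmem _ _ _).mpr he₁
      have hm₂ : (a, u₂, v₂) ∈ Lst := (hmem _ _ _).mpr he₂
      have hlt : LX (a, u₁, v₁) (a, u₂, v₂) :=
        (hlex _ _).mpr (Or.inr ⟨rfl, Or.inl hu⟩)
      exact (hkey _ _ hm₁ hm₂ hlt).2.1 rfl
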